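/- Let Γ and G be groups and f : Γ → G any map, with defect set D_f. If x ∈ G can be written as a product x = a₁ a₂ ⋯ a_k with each a_i ∈ D_f ∪ D_f⁻¹, then for every γ ∈ Γ one has f(γ)⁻¹ x f(γ) ∈ (D_f² D_f⁻¹ ∪ D_f D_f⁻²)ᵏ. -/

import Mathlib

open scoped Pointwise

/-- The defect set of a map `f : Γ → G`:
`D_f = { f(y)⁻¹ f(x)⁻¹ f(xy) : x, y ∈ Γ }`. -/
def defectSet {Γ G : Type*} [Group Γ] [Group G] (f : Γ → G) : Set G :=
  {d | ∃ x y : Γ, d = (f y)⁻¹ * (f x)⁻¹ * f (x * y)}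

lemma conj_defect_mem {Γ G : Type*} [Group Γ] [Group G] (f : Γ → G)
    {d : G} (hd : d ∈ defectSet f) (γ : Γ) :
    (f γ)⁻¹ * d * f γ ∈ defectSet f * defectSet f * (defectSet f)⁻¹ := by
  obtain ⟨x, y, rfl⟩ := hd
  have h3 : (f γ)⁻¹ * (f y)⁻¹ * f (y * γ) ∈ defectSet f := ⟨y, γ, rfl⟩
  have h2 : (f (y * γ))⁻¹ * (f x)⁻¹ * f (x * (y * γ)) ∈ defectSet f := ⟨x, y * γ, rfl⟩
  have h1 : ((f γ)⁻¹ * (f (x * y))⁻¹ * f (x * y * γ))⁻¹ ∈ (defectSet f)⁻¹ :=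
    Set.inv_mem_inv.mpr ⟨x * y, γ, rfl⟩
  have key := Set.mul_mem_mul (Set.mul_mem_mul h3 h2) h1
  convert key using 1
  rw [mul_assoc x y γ]
  group

lemma conj_defect_inv_mem {Γ G : Type*} [Group Γ] [Group G] (f : Γ → G)
    {d : G} (hd : d ∈ defectSet f) (γ : Γ) :
    (f γ)⁻¹ * d⁻¹ * f γ ∈ defectSet f * ((defectSet f)⁻¹ * (defectSet f)⁻¹) := by
  have h := Set.inv_mem_inv.mpr (conj_defect_mem f hd γ)
  rw [mul_inv_rev, mul_inv_rev, inv_inv, mul_assoc] at h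
  convert h using 1
  group

theorem conj_of_word_in_defect {Γ G : Type*} [Group Γ] [Group G] (f : Γ → G)
    (L : List G) (hL : ∀ a ∈ L, a ∈ defectSet f ∪ (defectSet f)⁻¹) (γ : Γ) :
    (f γ)⁻¹ * L.prod * f γ ∈
      (defectSet f * defectSet f * (defectSet f)⁻¹ ∪
        defectSet f * ((defectSet f)⁻¹ * (defectSet f)⁻¹)) ^ L.length := by
  induction L with
  | nil => simp
  | cons a L ih =>
    have ha := hL a List.mem_cons_self
    have key : (f γ)⁻¹ * a * f γ ∈
        (defectSet f * defectSet f * (defectSet f)⁻¹ ∪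
          defectSet f * ((defectSet f)⁻¹ * (defectSet f)⁻¹)) := by
      rcases ha with ha | ha
      · exact Or.inl (conj_defect_mem f ha γ)
      · have := conj_defect_inv_mem f (Set.mem_inv.mp ha) γ
        rw [inv_inv] at this
        exact Or.inr this
    rw [List.prod_cons, List.length_cons, pow_succ']
    exact ⟨(f γ)⁻¹ * a * f γ, key, (f γ)⁻¹ * L.prod * f γ,
      ih (fun b hb => hL b (List.mem_cons_of_mem a hb)), by group⟩
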